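/- arXiv:2301.08315 — 2 statements merged into one kernel-verified Lean document; each statement's English description precedes it below -/
import Mathlib

section
/- For every ℓ ≥ 1 and every ε > 0, the averaged Hermite coefficient B^ε_{2ℓ} = (ψ_{2ℓ}(ε) - ψ_{2ℓ}(-ε))/(2ε · (2ℓ)!), with ψ_q(t) = -H_{q-1}(t)φ(t), satisfies |B^ε_{2ℓ}| ≤ φ(0)/(2^ℓ ℓ!) = |B_{2ℓ}|, where B_{2ℓ} = H_{2ℓ}(0)φ(0)/(2ℓ)!. -/
open Polynomial Real

/-- the standard Gaussian density `φ(t) = (2π)^{-1/2} e^{-t²/2}` -/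
noncomputable def stdGaussian (t : ℝ) : ℝ := (2 * Real.pi) ^ (-(1:ℝ)/2) * Real.exp (-t ^ 2 / 2)

/-- `ψ_q(t) = -H_{q-1}(t) φ(t)` for `q ≥ 1` -/
noncomputable def psiHermite (q : ℕ) (t : ℝ) : ℝ :=
  -(Polynomial.aeval t (hermite (q - 1))) * stdGaussian t

noncomputable def aH (n : ℕ) (t : ℝ) : ℝ := (aeval t (hermite n)) * stdGaussian t

lemma derivative_hermite_succ (n : ℕ) :
    derivative (hermite (n+1)) = C ((n:ℤ)+1) * hermite n := by
  ext k
  rw [coeff_derivative, coeff_C_mul, coeff_hermite, coeff_hermite]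
  have hpar : Even (n + 1 + (k + 1)) ↔ Even (n + k) := by
    simp only [Nat.even_iff]; omega
  split_ifs with h h' h'
  · have h1 : n + 1 - (k+1) = n - k := by omega
    rw [h1]
    have h2 : ((n+1) * n.choose k : ℤ) = ((n+1).choose (k+1) : ℤ) * ((k:ℤ)+1) := by
      exact_mod_cast Nat.add_one_mul_choose_eq n k
    linear_combination ((-1:ℤ)^((n-k)/2) * (n-k-1).doubleFactorial) * h2.symm
  · exact absurd (hpar.mp h) h'
  · exact absurd (hpar.mpr h') h
  · simp

lemma hasDerivAt_stdGaussian (t : ℝ) :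
    HasDerivAt stdGaussian (-t * stdGaussian t) t := by
  have h1 : HasDerivAt (fun t : ℝ => -t ^ 2 / 2) (-t) t := by
    have := ((hasDerivAt_pow 2 t).neg).div_const 2
    simpa using this.congr_deriv (by ring)
  have h2 := ((h1.exp).const_mul ((2 * Real.pi) ^ (-(1:ℝ)/2)))
  rw [show stdGaussian = fun y : ℝ => (2*Real.pi) ^ (-(1:ℝ)/2) * Real.exp (-y^2/2) from rfl]
  refine h2.congr_deriv ?_
  beta_reduce; ring

lemma hasDerivAt_aH (n : ℕ) (t : ℝ) :
    HasDerivAt (aH n) (-(aH (n+1) t)) t := by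
  have hp := (Polynomial.hasDerivAt_aeval (hermite n) t)
  have := hp.mul (hasDerivAt_stdGaussian t)
  have key : aeval t (derivative (hermite n)) * stdGaussian t +
      aeval t (hermite n) * (-t * stdGaussian t) = -(aH (n+1) t) := by
    have hs : (aeval t (hermite (n+1)) : ℝ)
        = t * aeval t (hermite n) - aeval t (derivative (hermite n)) := by
      rw [hermite_succ]; simp
    simp only [aH, hs]; ring
  rw [key] at this
  exact this

lemma aH_recur (n : ℕ) (t : ℝ) :
    aH (n+2) t = t * aH (n+1) t - ((n:ℝ)+1) * aH n t := by
  have hs : (aeval t (hermite (n+2)) : ℝ)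
      = t * aeval t (hermite (n+1)) - ((n:ℝ)+1) * aeval t (hermite n) := by
    rw [hermite_succ, derivative_hermite_succ]; simp
  simp only [aH, hs]; ring

lemma continuous_aH (n : ℕ) : Continuous (aH n) := by
  apply Continuous.mul
  · exact Polynomial.continuous_aeval (hermite n)
  · exact continuous_const.mul (Real.continuous_exp.comp (by fun_prop))

lemma even_bound (m : ℕ) (t : ℝ) : |aH (2*m) t| ≤ |aH (2*m) 0| := by
  set n := 2*m with hn
  set a : ℝ → ℝ := aH n
  set b : ℝ → ℝ := aH (n+1)
  set E : ℝ → ℝ := fun t => a t * a t + (b t * b t) / ((n:ℝ)+1) with hE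
  have hb' : ∀ x, HasDerivAt b (-(x * b x - ((n:ℝ)+1) * a x)) x := by
    intro x
    have := hasDerivAt_aH (n+1) x
    rwa [aH_recur n x] at this
  have hEderiv : ∀ x, HasDerivAt E (-2 * x * (b x)^2 / ((n:ℝ)+1)) x := by
    intro x
    have ha := hasDerivAt_aH n x
    have h1 := (ha.mul ha).add (((hb' x).mul (hb' x)).div_const ((n:ℝ)+1))
    have hne : (n:ℝ)+1 ≠ 0 := by positivity
    refine h1.congr_deriv ?_
    field_simp
    ring
  have hdiff : Differentiable ℝ E := fun x => (hEderiv x).differentiableAt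
  have hEdval : ∀ x, deriv E x = -2 * x * (b x)^2 / ((n:ℝ)+1) := fun x => (hEderiv x).deriv
  have hle : ∀ x, E x ≤ E 0 := by
    intro x
    rcases le_total x 0 with hx | hx
    · have hmono : MonotoneOn E (Set.Iic 0) := by
        apply monotoneOn_of_deriv_nonneg (convex_Iic 0) hdiff.continuous.continuousOn
          hdiff.differentiableOn
        intro y hy
        rw [interior_Iic] at hy
        rw [hEdval]
        have : y < 0 := hy
        have h2 : (0:ℝ) ≤ (b y)^2 := sq_nonneg _
        have h3 : (0:ℝ) < (n:ℝ)+1 := by positivity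
        have h4 : 0 ≤ -2 * y := by linarith
        have := mul_nonneg h4 h2
        positivity
      exact hmono hx Set.self_mem_Iic hx
    · have hanti : AntitoneOn E (Set.Ici 0) := by
        apply antitoneOn_of_deriv_nonpos (convex_Ici 0) hdiff.continuous.continuousOn
          hdiff.differentiableOn
        intro y hy
        rw [interior_Ici] at hy
        rw [hEdval]
        have hy0 : (0:ℝ) < y := hy
        have h3 : (0:ℝ) < (n:ℝ)+1 := by positivity
        apply div_nonpos_of_nonpos_of_nonneg
        · nlinarith [sq_nonneg (b y)]
        · linarith
      exact hanti Set.self_mem_Ici hx hx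
  have hb0 : b 0 = 0 := by
    have hodd : Odd ((n+1) + 0) := ⟨m, by omega⟩
    have hc : (hermite (n+1)).coeff 0 = 0 := coeff_hermite_of_odd_add hodd
    have hv : (aeval (0:ℝ) (hermite (n+1))) = ((hermite (n+1)).coeff 0 : ℝ) := by
      simp [Polynomial.aeval_def, Polynomial.eval₂_at_zero]
    simp only [b, aH, hv, hc]
    simp
  have hE0 : E 0 = a 0 * a 0 := by simp [hE, hb0]
  have h := hle t
  rw [hE0] at h
  have h2 : a t * a t ≤ a 0 * a 0 := by
    have h5 : (0:ℝ) ≤ (b t * b t) / ((n:ℝ)+1) :=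
      div_nonneg (mul_self_nonneg _) (by positivity)
    have hEt : E t = a t * a t + b t * b t / ((n:ℝ)+1) := rfl
    linarith [h, hEt ▸ h]
  nlinarith [h2, abs_nonneg (a t), abs_nonneg (a 0), abs_mul_abs_self (a t),
    abs_mul_abs_self (a 0), mul_self_nonneg (|a t| - |a 0|)]

lemma aeval_zero_eq_coeff (p : Polynomial ℤ) :
    (aeval (0:ℝ) p) = (p.coeff 0 : ℝ) := by
  simp [Polynomial.aeval_def, Polynomial.eval₂_at_zero]

lemma odd_bound (m : ℕ) (t : ℝ) : |aH (2*m+1) t| ≤ |t| * |aH (2*(m+1)) 0| := by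
  have h0 : aH (2*m+1) 0 = 0 := by
    have hodd : Odd ((2*m+1) + 0) := ⟨m, by omega⟩
    have hc : (hermite (2*m+1)).coeff 0 = 0 := coeff_hermite_of_odd_add hodd
    simp only [aH, aeval_zero_eq_coeff, hc]
    simp
  have hftc : ∫ s in (0:ℝ)..t, -aH (2*m+2) s = aH (2*m+1) t - aH (2*m+1) 0 := by
    apply intervalIntegral.integral_eq_sub_of_hasDerivAt
    · intro s _
      exact hasDerivAt_aH (2*m+1) s
    · exact ((continuous_aH (2*m+2)).neg).intervalIntegrable _ _
  have hbound : ‖∫ s in (0:ℝ)..t, -aH (2*m+2) s‖ ≤ |aH (2*(m+1)) 0| * |t - 0| := by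
    apply intervalIntegral.norm_integral_le_of_norm_le_const
    intro x _
    rw [norm_neg, Real.norm_eq_abs]
    have := even_bound (m+1) x
    rwa [show 2*(m+1) = 2*m+2 from by ring] at this
  rw [hftc, h0, sub_zero, Real.norm_eq_abs, sub_zero] at hbound
  calc |aH (2*m+1) t| ≤ |aH (2*(m+1)) 0| * |t| := by
        rwa [show 2*(m+1) = 2*m+2 from by ring]
      _ = |t| * |aH (2*(m+1)) 0| := mul_comm _ _

theorem Bcoef_eps_le (ℓ : ℕ) (hl : 1 ≤ ℓ) (ε : ℝ) (hε : 0 < ε) :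
    |(psiHermite (2 * ℓ) ε - psiHermite (2 * ℓ) (-ε)) / (2 * ε * Nat.factorial (2 * ℓ))|
        ≤ stdGaussian 0 / (2 ^ ℓ * Nat.factorial ℓ) ∧
    stdGaussian 0 / (2 ^ ℓ * Nat.factorial ℓ)
        = |(Polynomial.aeval (0:ℝ) (hermite (2 * ℓ))) * stdGaussian 0 / Nat.factorial (2 * ℓ)| := by
  obtain ⟨k, rfl⟩ : ∃ k, ℓ = k + 1 := ⟨ℓ - 1, by omega⟩
  set ℓ' := k + 1 with hℓ'
  -- value at zero
  have hφ0 : 0 < stdGaussian 0 := by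
    unfold stdGaussian
    positivity
  have hcoeff : (hermite (2*ℓ')).coeff 0 = (-1)^ℓ' * (2*ℓ'-1).doubleFactorial := by
    have := coeff_hermite_explicit ℓ' 0
    simpa using this
  have haH0 : |aH (2*ℓ') 0| = ((2*ℓ'-1).doubleFactorial : ℝ) * stdGaussian 0 := by
    simp only [aH, aeval_zero_eq_coeff, hcoeff]
    push_cast
    rw [abs_mul, abs_mul, abs_pow, abs_neg, abs_one, one_pow, one_mul,
      abs_of_nonneg (Nat.cast_nonneg _), abs_of_pos hφ0]
  -- factorial identity : (2ℓ)! = 2^ℓ * ℓ! * (2ℓ-1)‼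
  have hfact : ((2*ℓ').factorial : ℝ) = (2:ℝ)^ℓ' * (ℓ'.factorial : ℝ) * ((2*ℓ'-1).doubleFactorial : ℝ) := by
    have h1 : (2*ℓ'-1) + 1 = 2*ℓ' := by omega
    have h2 := Nat.factorial_eq_mul_doubleFactorial (2*ℓ'-1)
    rw [h1] at h2
    rw [h2, Nat.doubleFactorial_two_mul]
    push_cast
    ring
  have hM : |aH (2*ℓ') 0| / ((2*ℓ').factorial : ℝ) = stdGaussian 0 / (2^ℓ' * ℓ'.factorial) := by
    rw [haH0, hfact]
    have hd : (0:ℝ) < ((2*ℓ'-1).doubleFactorial : ℝ) := by positivity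
    have : (0:ℝ) < (2:ℝ)^ℓ' * (ℓ'.factorial : ℝ) := by positivity
    field_simp
  constructor
  · -- main bound
    have hpsi : ∀ t : ℝ, psiHermite (2*ℓ') t = -aH (2*k+1) t := by
      intro t
      have : 2*ℓ' - 1 = 2*k+1 := by omega
      simp only [psiHermite, this, aH, neg_mul]
    have hb1 := odd_bound k ε
    have hb2 := odd_bound k (-ε)
    rw [show k + 1 = ℓ' from rfl] at hb1 hb2
    have hnum : |psiHermite (2*ℓ') ε - psiHermite (2*ℓ') (-ε)| ≤ 2 * ε * |aH (2*ℓ') 0| := by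
      rw [hpsi, hpsi]
      have habs : |(-aH (2*k+1) ε) - (-aH (2*k+1) (-ε))| ≤ |aH (2*k+1) ε| + |aH (2*k+1) (-ε)| := by
        rw [neg_sub_neg]
        calc |aH (2*k+1) (-ε) - aH (2*k+1) ε|
            ≤ |aH (2*k+1) (-ε)| + |aH (2*k+1) ε| := abs_sub (aH (2*k+1) (-ε)) (aH (2*k+1) ε)
          _ = |aH (2*k+1) ε| + |aH (2*k+1) (-ε)| := add_comm _ _
      have hε' : |ε| = ε := abs_of_pos hε
      have hε'' : |(-ε)| = ε := by rw [abs_neg]; exact hε'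
      rw [hε'] at hb1; rw [hε''] at hb2
      calc |(-aH (2*k+1) ε) - (-aH (2*k+1) (-ε))| ≤ |aH (2*k+1) ε| + |aH (2*k+1) (-ε)| := habs
        _ ≤ ε * |aH (2*ℓ') 0| + ε * |aH (2*ℓ') 0| := add_le_add hb1 hb2
        _ = 2 * ε * |aH (2*ℓ') 0| := by ring
    have hden : (0:ℝ) < 2 * ε * ((2*ℓ').factorial : ℝ) := by positivity
    rw [abs_div, abs_of_pos hden, div_le_iff₀ hden]
    rw [← hM]
    have hfa : (0:ℝ) < ((2*ℓ').factorial : ℝ) := by positivity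
    calc |psiHermite (2*ℓ') ε - psiHermite (2*ℓ') (-ε)| ≤ 2 * ε * |aH (2*ℓ') 0| := hnum
      _ = |aH (2*ℓ') 0| / ((2*ℓ').factorial : ℝ) * (2 * ε * ((2*ℓ').factorial : ℝ)) := by
          field_simp
  · -- equality of constants
    rw [← hM]
    simp only [aH, aeval_zero_eq_coeff]
    rw [abs_div, abs_of_pos (by positivity : (0:ℝ) < ((2*ℓ').factorial:ℝ))]
end

section
/- Let (Ω, μ) be a measure space and K: ℍ × Ω → ℝ a kernel with ∫_Ω K(x,w)K(y,w) dμ(w) = F(d(x,y)) for a function F: [0,∞) → ℝ, where (ℍ, d, m) is a metric measure space. Then for every q ≥ 1, r ∈ {1,…,q-1}, and measurable B ⊆ ℍ of finite measure, the squared L²-norm of the r-contraction of f = ∫_B K(x,·)^{⊗q} dm(x) with itself equals ∫_{B⁴} F(d(x,y))^r F(d(y,z))^{q-r} F(d(z,w))^r F(d(w,x))^{q-r} dm⁴(x,y,z,w). -/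
open MeasureTheory

/-- `f(t) = ∫_B ∏_i K(x, t_i) dm(x)`, the kernel of the `q`-th polyspectrum,
indexed by an arbitrary finite index set. -/
noncomputable def kernelIntegral {H Ω : Type*} [MeasurableSpace H]
    (m : Measure H) (K : H → Ω → ℝ) (B : Set H) {ι : Type*} [Fintype ι]
    (t : ι → Ω) : ℝ :=
  ∫ x in B, ∏ i, K x (t i) ∂m

/-- the `r`-contraction `f ⊗_r f` of the polyspectrum kernel with itself. -/
noncomputable def kernelContraction {H Ω : Type*} [MeasurableSpace H] [MeasurableSpace Ω]
    (m : Measure H) (μ : Measure Ω) (K : H → Ω → ℝ) (B : Set H) (q r : ℕ)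
    (t : (Fin (q - r) → Ω) × (Fin (q - r) → Ω)) : ℝ :=
  ∫ s : Fin r → Ω,
      kernelIntegral m K B (Sum.elim t.1 s) * kernelIntegral m K B (Sum.elim t.2 s)
    ∂(Measure.pi fun _ => μ)

private lemma bddIntegrable {α : Type*} [MeasurableSpace α] {ν : Measure α}
    [IsFiniteMeasure ν] {f : α → ℝ} (hm : AEStronglyMeasurable f ν) {C : ℝ}
    (hb : ∀ a, |f a| ≤ C) : Integrable f ν :=
  (integrable_const C).mono' hm (Filter.Eventually.of_forall fun a => by
    simpa [Real.norm_eq_abs] using hb a)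

private lemma absMulLe {a b A B : ℝ} (ha : |a| ≤ A) (hb : |b| ≤ B) : |a * b| ≤ A * B := by
  rw [abs_mul]
  exact mul_le_mul ha hb (abs_nonneg _) ((abs_nonneg a).trans ha)

private lemma absPowLe {a A : ℝ} (ha : |a| ≤ A) (k : ℕ) : |a ^ k| ≤ A ^ k := by
  rw [abs_pow]
  exact pow_le_pow_left₀ (abs_nonneg _) ha k

theorem contraction_norm_eq_quadruple_integral
    {H Ω : Type*} [MetricSpace H] [MeasurableSpace H] [MeasurableSpace Ω]
    (m : Measure H) (μ : Measure Ω) [IsFiniteMeasure μ]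
    (K : H → Ω → ℝ) (F : ℝ → ℝ)
    (hKmeas : Measurable (Function.uncurry K))
    (hKbd : ∃ Cb : ℝ, ∀ x w, |K x w| ≤ Cb)
    (hcov : ∀ x y : H, (∫ w, K x w * K y w ∂μ) = F (dist x y))
    (q r : ℕ) (hr : 1 ≤ r) (hrq : r ≤ q - 1) (hq : 1 ≤ q)
    (B : Set H) (hB : MeasurableSet B) (hBfin : m B < ⊤) :
    (∫ t : (Fin (q - r) → Ω) × (Fin (q - r) → Ω),
        (kernelContraction m μ K B q r t) ^ 2
      ∂((Measure.pi fun _ => μ).prod (Measure.pi fun _ => μ)))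
    = ∫ x in B, ∫ y in B, ∫ z in B, ∫ w in B,
        F (dist x y) ^ r * F (dist y z) ^ (q - r) *
          F (dist z w) ^ r * F (dist w x) ^ (q - r) ∂m ∂m ∂m ∂m := by
  classical
  obtain ⟨Cb, hCb⟩ := hKbd
  set C : ℝ := max Cb 0 with hCdef
  have hC0 : (0:ℝ) ≤ C := le_max_right _ _
  have hC : ∀ x w, |K x w| ≤ C := fun x w => (hCb x w).trans (le_max_left _ _)
  set n := q - r with hn
  set νB : Measure H := m.restrict B with hνB
  haveI hνfin : IsFiniteMeasure νB := ⟨by rw [hνB, Measure.restrict_apply_univ]; exact hBfin⟩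
  set G : H → H → ℝ := fun x y => ∫ w, K x w * K y w ∂μ with hGdef
  have hGF : ∀ x y, G x y = F (dist x y) := fun x y => hcov x y
  have hGsym : ∀ x y, G x y = G y x := fun x y => by rw [hGF, hGF, dist_comm]
  have hKm : Measurable fun p : H × Ω => K p.1 p.2 := hKmeas
  have hPmeas : ∀ k : ℕ, Measurable fun p : H × (Fin k → Ω) => ∏ i, K p.1 (p.2 i) := by
    intro k
    exact Finset.measurable_prod _ fun i _ =>
      hKm.comp (measurable_fst.prodMk ((measurable_pi_apply i).comp measurable_snd))
  have hPbd : ∀ (k : ℕ) (x : H) (t : Fin k → Ω), |∏ i, K x (t i)| ≤ C ^ k := by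
    intro k x t
    calc |∏ i, K x (t i)| = ∏ i, |K x (t i)| := Finset.abs_prod _ _
      _ ≤ ∏ _i : Fin k, C :=
        Finset.prod_le_prod (fun i _ => abs_nonneg _) (fun i _ => hC x (t i))
      _ = C ^ k := by simp
  have hGmeas : Measurable fun p : H × H => G p.1 p.2 := by
    simp only [hGdef]
    have hm2 : StronglyMeasurable fun p : (H × H) × Ω => K p.1.1 p.2 * K p.1.2 p.2 :=
      ((hKm.comp ((measurable_fst.comp measurable_fst).prodMk measurable_snd)).mul
        (hKm.comp
          ((measurable_snd.comp measurable_fst).prodMk measurable_snd))).stronglyMeasurable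
    exact hm2.integral_prod_right'.measurable
  set D : ℝ := C ^ 2 * (μ Set.univ).toReal with hDdef
  have hD0 : (0:ℝ) ≤ D := by
    rw [hDdef]; exact mul_nonneg (pow_nonneg hC0 2) ENNReal.toReal_nonneg
  have hGbd : ∀ x y, |G x y| ≤ D := by
    intro x y
    rw [hDdef]
    simp only [hGdef]
    rw [← Real.norm_eq_abs]
    refine norm_integral_le_of_norm_le_const (Filter.Eventually.of_forall fun w => ?_)
    rw [Real.norm_eq_abs, abs_mul, sq]
    exact mul_le_mul (hC x w) (hC y w) (abs_nonneg _) hC0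
  have hprodint : ∀ (k : ℕ) (x y : H),
      (∫ s : Fin k → Ω, (∏ i, K x (s i)) * (∏ i, K y (s i)) ∂(Measure.pi fun _ => μ))
        = G x y ^ k := by
    intro k x y
    simp only [hGdef]
    have h1 : ∀ s : Fin k → Ω, (∏ i, K x (s i)) * (∏ i, K y (s i))
        = ∏ i, (K x (s i) * K y (s i)) := fun s => (Finset.prod_mul_distrib).symm
    simp only [h1]
    letI : MeasureSpace Ω := ⟨μ⟩
    haveI : SigmaFinite (volume : Measure Ω) := (by infer_instance : SigmaFinite μ)
    rw [show (Measure.pi fun _ : Fin k => μ) = (volume : Measure (Fin k → Ω)) from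
      (volume_pi).symm]
    have h := MeasureTheory.integral_fintype_prod_eq_pow (ι := Fin k) (fun w => K x w * K y w) (μ := μ)
    simp only [Fintype.card_fin] at h
    exact h
  -- Step 1: formula for the contraction
  have hcontr : ∀ t : (Fin n → Ω) × (Fin n → Ω),
      kernelContraction m μ K B q r t
        = ∫ p : H × H,
            (∏ i, K p.1 (t.1 i)) * (∏ i, K p.2 (t.2 i)) * G p.1 p.2 ^ r
            ∂(νB.prod νB) := by
    intro t
    rw [kernelContraction]
    simp only [kernelIntegral, Fintype.prod_sum_type, Sum.elim_inl, Sum.elim_inr, ← hνB]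
    have e1 : ∀ s : Fin r → Ω,
        (∫ x, (∏ i, K x (t.1 i)) * ∏ j, K x (s j) ∂νB) *
          (∫ y, (∏ i, K y (t.2 i)) * ∏ j, K y (s j) ∂νB)
          = ∫ p : H × H, ((∏ i, K p.1 (t.1 i)) * ∏ j, K p.1 (s j)) *
              ((∏ i, K p.2 (t.2 i)) * ∏ j, K p.2 (s j)) ∂(νB.prod νB) :=
      fun s => (integral_prod_mul _ _).symm
    refine (integral_congr_ae (Filter.Eventually.of_forall fun s => e1 s)).trans ?_
    have hInt2 : Integrable (Function.uncurry fun (s : Fin r → Ω) (p : H × H) =>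
        ((∏ i, K p.1 (t.1 i)) * ∏ j, K p.1 (s j)) *
          ((∏ i, K p.2 (t.2 i)) * ∏ j, K p.2 (s j)))
        ((Measure.pi fun _ => μ).prod (νB.prod νB)) := by
      apply bddIntegrable (C := (C ^ n * C ^ r) * (C ^ n * C ^ r))
      · apply Measurable.aestronglyMeasurable
        apply Measurable.mul
        · exact ((hPmeas n).comp (((measurable_fst.comp measurable_snd).prodMk
              measurable_const))).mul
            ((hPmeas r).comp ((measurable_fst.comp measurable_snd).prodMk measurable_fst))
        · exact ((hPmeas n).comp (((measurable_snd.comp measurable_snd).prodMk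
              measurable_const))).mul
            ((hPmeas r).comp ((measurable_snd.comp measurable_snd).prodMk measurable_fst))
      · rintro ⟨s, p⟩
        exact absMulLe (absMulLe (hPbd n p.1 t.1) (hPbd r p.1 s))
          (absMulLe (hPbd n p.2 t.2) (hPbd r p.2 s))
    rw [integral_integral_swap hInt2]
    refine integral_congr_ae (Filter.Eventually.of_forall fun p => ?_)
    have e2 : ∀ s : Fin r → Ω,
        ((∏ i, K p.1 (t.1 i)) * ∏ j, K p.1 (s j)) *
          ((∏ i, K p.2 (t.2 i)) * ∏ j, K p.2 (s j))
        = ((∏ i, K p.1 (t.1 i)) * (∏ i, K p.2 (t.2 i))) *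
            ((∏ j, K p.1 (s j)) * ∏ j, K p.2 (s j)) := fun s => by ring
    simp only [e2]
    rw [integral_const_mul, hprodint r p.1 p.2, mul_assoc]

  -- notation
  simp only [← hGF]
  -- Step 2: square as a double integral
  have hsq : ∀ t : (Fin n → Ω) × (Fin n → Ω),
      (kernelContraction m μ K B q r t) ^ 2
        = ∫ z : (H × H) × (H × H),
            ((∏ i, K z.1.1 (t.1 i)) * (∏ i, K z.1.2 (t.2 i)) * G z.1.1 z.1.2 ^ r) *
            ((∏ i, K z.2.1 (t.1 i)) * (∏ i, K z.2.2 (t.2 i)) * G z.2.1 z.2.2 ^ r)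
            ∂((νB.prod νB).prod (νB.prod νB)) := by
    intro t
    rw [hcontr t, sq]
    exact (integral_prod_mul _ _).symm
  have hΦint : Integrable (Function.uncurry fun (t : (Fin n → Ω) × (Fin n → Ω))
      (z : (H × H) × (H × H)) =>
        ((∏ i, K z.1.1 (t.1 i)) * (∏ i, K z.1.2 (t.2 i)) * G z.1.1 z.1.2 ^ r) *
        ((∏ i, K z.2.1 (t.1 i)) * (∏ i, K z.2.2 (t.2 i)) * G z.2.1 z.2.2 ^ r))
      (((Measure.pi fun _ => μ).prod (Measure.pi fun _ => μ)).prod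
        ((νB.prod νB).prod (νB.prod νB))) := by
    apply bddIntegrable (C := (C ^ n * C ^ n * D ^ r) * (C ^ n * C ^ n * D ^ r))
    · apply Measurable.aestronglyMeasurable
      have pt1 : Measurable fun w : ((Fin n → Ω) × (Fin n → Ω)) × ((H × H) × (H × H)) =>
          w.1.1 := measurable_fst.comp measurable_fst
      have pt2 : Measurable fun w : ((Fin n → Ω) × (Fin n → Ω)) × ((H × H) × (H × H)) =>
          w.1.2 := measurable_snd.comp measurable_fst
      have px : Measurable fun w : ((Fin n → Ω) × (Fin n → Ω)) × ((H × H) × (H × H)) =>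
          w.2.1.1 := measurable_fst.comp (measurable_fst.comp measurable_snd)
      have py : Measurable fun w : ((Fin n → Ω) × (Fin n → Ω)) × ((H × H) × (H × H)) =>
          w.2.1.2 := measurable_snd.comp (measurable_fst.comp measurable_snd)
      have pc : Measurable fun w : ((Fin n → Ω) × (Fin n → Ω)) × ((H × H) × (H × H)) =>
          w.2.2.1 := measurable_fst.comp (measurable_snd.comp measurable_snd)
      have pd : Measurable fun w : ((Fin n → Ω) × (Fin n → Ω)) × ((H × H) × (H × H)) =>
          w.2.2.2 := measurable_snd.comp (measurable_snd.comp measurable_snd)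
      exact ((((hPmeas n).comp (px.prodMk pt1)).mul ((hPmeas n).comp (py.prodMk pt2))).mul
          ((hGmeas.comp (px.prodMk py)).pow_const r)).mul
        ((((hPmeas n).comp (pc.prodMk pt1)).mul ((hPmeas n).comp (pd.prodMk pt2))).mul
          ((hGmeas.comp (pc.prodMk pd)).pow_const r))
    · rintro ⟨t, z⟩
      exact absMulLe
        (absMulLe (absMulLe (hPbd n _ _) (hPbd n _ _)) (absPowLe (hGbd _ _) r))
        (absMulLe (absMulLe (hPbd n _ _) (hPbd n _ _)) (absPowLe (hGbd _ _) r))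
  have hDbigmeas : Measurable fun z : (H × H) × (H × H) =>
      G z.1.1 z.1.2 ^ r * G z.2.1 z.2.2 ^ r * (G z.1.1 z.2.1 ^ n * G z.1.2 z.2.2 ^ n) := by
    have px : Measurable fun z : (H × H) × (H × H) => z.1.1 :=
      measurable_fst.comp measurable_fst
    have py : Measurable fun z : (H × H) × (H × H) => z.1.2 :=
      measurable_snd.comp measurable_fst
    have pc : Measurable fun z : (H × H) × (H × H) => z.2.1 :=
      measurable_fst.comp measurable_snd
    have pd : Measurable fun z : (H × H) × (H × H) => z.2.2 :=
      measurable_snd.comp measurable_snd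
    exact (((hGmeas.comp (px.prodMk py)).pow_const r).mul
        ((hGmeas.comp (pc.prodMk pd)).pow_const r)).mul
      (((hGmeas.comp (px.prodMk pc)).pow_const n).mul
        ((hGmeas.comp (py.prodMk pd)).pow_const n))
  have hDbigbd : ∀ z : (H × H) × (H × H),
      |G z.1.1 z.1.2 ^ r * G z.2.1 z.2.2 ^ r *
        (G z.1.1 z.2.1 ^ n * G z.1.2 z.2.2 ^ n)| ≤ D ^ r * D ^ r * (D ^ n * D ^ n) :=
    fun z => absMulLe (absMulLe (absPowLe (hGbd _ _) r) (absPowLe (hGbd _ _) r))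
      (absMulLe (absPowLe (hGbd _ _) n) (absPowLe (hGbd _ _) n))
  have hDbigint : Integrable
      (fun z : (H × H) × (H × H) =>
        G z.1.1 z.1.2 ^ r * G z.2.1 z.2.2 ^ r * (G z.1.1 z.2.1 ^ n * G z.1.2 z.2.2 ^ n))
      ((νB.prod νB).prod (νB.prod νB)) :=
    bddIntegrable hDbigmeas.aestronglyMeasurable hDbigbd
  have hJ0int : Integrable
      (fun p : H × H => ∫ qq : H × H,
        G p.1 p.2 ^ r * G qq.1 qq.2 ^ r * (G p.1 qq.1 ^ n * G p.2 qq.2 ^ n) ∂(νB.prod νB))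
      (νB.prod νB) := by
    apply bddIntegrable
      (C := D ^ r * D ^ r * (D ^ n * D ^ n) * (((νB.prod νB)) Set.univ).toReal)
    · exact (StronglyMeasurable.integral_prod_right'
        (f := fun z : (H × H) × (H × H) =>
          G z.1.1 z.1.2 ^ r * G z.2.1 z.2.2 ^ r * (G z.1.1 z.2.1 ^ n * G z.1.2 z.2.2 ^ n))
        hDbigmeas.stronglyMeasurable).aestronglyMeasurable
    · intro p
      rw [← Real.norm_eq_abs]
      refine norm_integral_le_of_norm_le_const (Filter.Eventually.of_forall fun qq => ?_)
      rw [Real.norm_eq_abs]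
      exact absMulLe (absMulLe (absPowLe (hGbd _ _) r) (absPowLe (hGbd _ _) r))
        (absMulLe (absPowLe (hGbd _ _) n) (absPowLe (hGbd _ _) n))
  have hsect : ∀ x y : H, Integrable
      (fun qq : H × H =>
        G x y ^ r * G qq.1 qq.2 ^ r * (G x qq.1 ^ n * G y qq.2 ^ n))
      (νB.prod νB) := by
    intro x y
    apply bddIntegrable (C := D ^ r * D ^ r * (D ^ n * D ^ n))
    · apply Measurable.aestronglyMeasurable
      exact ((measurable_const.pow_const r).mul (hGmeas.pow_const r)).mul
        (((hGmeas.comp (measurable_const.prodMk measurable_fst)).pow_const n).mul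
          ((hGmeas.comp (measurable_const.prodMk measurable_snd)).pow_const n))
    · intro qq
      exact absMulLe (absMulLe (absPowLe (hGbd _ _) r) (absPowLe (hGbd _ _) r))
        (absMulLe (absPowLe (hGbd _ _) n) (absPowLe (hGbd _ _) n))
  have hswapint : ∀ x y : H, Integrable (Function.uncurry fun c d : H =>
      G x y ^ r * G c d ^ r * (G x c ^ n * G y d ^ n)) (νB.prod νB) := by
    intro x y
    apply bddIntegrable (C := D ^ r * D ^ r * (D ^ n * D ^ n))
    · apply Measurable.aestronglyMeasurable
      exact ((measurable_const.pow_const r).mul (hGmeas.pow_const r)).mul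
        (((hGmeas.comp (measurable_const.prodMk measurable_fst)).pow_const n).mul
          ((hGmeas.comp (measurable_const.prodMk measurable_snd)).pow_const n))
    · rintro ⟨c, d⟩
      exact absMulLe (absMulLe (absPowLe (hGbd _ _) r) (absPowLe (hGbd _ _) r))
        (absMulLe (absPowLe (hGbd _ _) n) (absPowLe (hGbd _ _) n))
  -- main calc
  calc (∫ t : (Fin n → Ω) × (Fin n → Ω), (kernelContraction m μ K B q r t) ^ 2
        ∂((Measure.pi fun _ => μ).prod (Measure.pi fun _ => μ)))
      = ∫ t : (Fin n → Ω) × (Fin n → Ω), (∫ z : (H × H) × (H × H),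
          ((∏ i, K z.1.1 (t.1 i)) * (∏ i, K z.1.2 (t.2 i)) * G z.1.1 z.1.2 ^ r) *
          ((∏ i, K z.2.1 (t.1 i)) * (∏ i, K z.2.2 (t.2 i)) * G z.2.1 z.2.2 ^ r)
          ∂((νB.prod νB).prod (νB.prod νB)))
          ∂((Measure.pi fun _ => μ).prod (Measure.pi fun _ => μ)) :=
        integral_congr_ae (Filter.Eventually.of_forall hsq)
    _ = ∫ z : (H × H) × (H × H), (∫ t : (Fin n → Ω) × (Fin n → Ω),
          ((∏ i, K z.1.1 (t.1 i)) * (∏ i, K z.1.2 (t.2 i)) * G z.1.1 z.1.2 ^ r) *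
          ((∏ i, K z.2.1 (t.1 i)) * (∏ i, K z.2.2 (t.2 i)) * G z.2.1 z.2.2 ^ r)
          ∂((Measure.pi fun _ => μ).prod (Measure.pi fun _ => μ)))
          ∂((νB.prod νB).prod (νB.prod νB)) := integral_integral_swap hΦint
    _ = ∫ z : (H × H) × (H × H),
          G z.1.1 z.1.2 ^ r * G z.2.1 z.2.2 ^ r * (G z.1.1 z.2.1 ^ n * G z.1.2 z.2.2 ^ n)
          ∂((νB.prod νB).prod (νB.prod νB)) := by
        refine integral_congr_ae (Filter.Eventually.of_forall fun z => ?_)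
        have e3 : ∀ t : (Fin n → Ω) × (Fin n → Ω),
            ((∏ i, K z.1.1 (t.1 i)) * (∏ i, K z.1.2 (t.2 i)) * G z.1.1 z.1.2 ^ r) *
            ((∏ i, K z.2.1 (t.1 i)) * (∏ i, K z.2.2 (t.2 i)) * G z.2.1 z.2.2 ^ r)
            = (G z.1.1 z.1.2 ^ r * G z.2.1 z.2.2 ^ r) *
                (((∏ i, K z.1.1 (t.1 i)) * (∏ i, K z.2.1 (t.1 i))) *
                 ((∏ i, K z.1.2 (t.2 i)) * (∏ i, K z.2.2 (t.2 i)))) := fun t => by ring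
        simp only [e3]
        rw [integral_const_mul,
          integral_prod_mul (fun t1 : Fin n → Ω => (∏ i, K z.1.1 (t1 i)) * ∏ i, K z.2.1 (t1 i))
            (fun t2 : Fin n → Ω => (∏ i, K z.1.2 (t2 i)) * ∏ i, K z.2.2 (t2 i)),
          hprodint n z.1.1 z.2.1, hprodint n z.1.2 z.2.2, mul_assoc]
    _ = ∫ p : H × H, (∫ qq : H × H,
          G p.1 p.2 ^ r * G qq.1 qq.2 ^ r * (G p.1 qq.1 ^ n * G p.2 qq.2 ^ n)
          ∂(νB.prod νB)) ∂(νB.prod νB) := integral_prod _ hDbigint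
    _ = ∫ x, ∫ y, (∫ qq : H × H,
          G x y ^ r * G qq.1 qq.2 ^ r * (G x qq.1 ^ n * G y qq.2 ^ n)
          ∂(νB.prod νB)) ∂νB ∂νB := integral_prod _ hJ0int
    _ = ∫ x, ∫ y, ∫ z, ∫ w,
          G x y ^ r * G y z ^ n * G z w ^ r * G w x ^ n ∂νB ∂νB ∂νB ∂νB := by
        refine integral_congr_ae (Filter.Eventually.of_forall fun x => ?_)
        refine integral_congr_ae (Filter.Eventually.of_forall fun y => ?_)
        beta_reduce
        rw [integral_prod _ (hsect x y),
          integral_integral_swap (hswapint x y)]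
        refine integral_congr_ae (Filter.Eventually.of_forall fun z => ?_)
        refine integral_congr_ae (Filter.Eventually.of_forall fun w => ?_)
        beta_reduce
        rw [hGsym w z, hGsym x w]
        ring
end
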